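/- The Milnor number of the Brieskorn polynomial f(x_0,...,x_n) = x_0^{a_0} + x_1^{a_1} + ... + x_n^{a_n} (with each a_i ≥ 2) at the origin equals (a_0 - 1)(a_1 - 1)···(a_n - 1); that is, the dimension as a complex vector space of the quotient of the formal power series ring C[[x_0,...,x_n]] by the ideal generated by the partial derivatives ∂f/∂x_i = a_i x_i^{a_i - 1} is (a_0 - 1)(a_1 - 1)···(a_n - 1). -/

import Mathlib

open MvPowerSeries Finsupp

variable {n : ℕ}

section Aux

variable (b : Fin (n + 1) → ℕ)

/-- evaluation map -/
noncomputable def brieskornAux : MvPowerSeries (Fin (n + 1)) ℂ →ₗ[ℂ]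
    ((Π i, Fin (b i)) → ℂ) :=
  LinearMap.pi fun d => MvPowerSeries.coeff (R := ℂ) (Finsupp.equivFunOnFinite.symm fun i => (d i : ℕ))

lemma brieskornAux_surjective : Function.Surjective (brieskornAux b) := by
  intro g
  refine ⟨(fun m => if h : ∀ i, m i < b i then g (fun i => ⟨m i, h i⟩) else 0 :
    (Fin (n + 1) →₀ ℕ) → ℂ), ?_⟩
  funext d
  have h : ∀ i, (Finsupp.equivFunOnFinite.symm fun i => ((d i : ℕ))) i < b i := by
    intro i; simp [(d i).isLt]
  simp only [brieskornAux, LinearMap.pi_apply, MvPowerSeries.coeff_apply]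
  show (if h : _ then _ else 0) = g d
  rw [dif_pos h]
  congr 1

lemma brieskornAux_ker :
    LinearMap.ker (brieskornAux b) =
      (Ideal.span (Set.range fun i : Fin (n + 1) =>
        (MvPowerSeries.X i : MvPowerSeries (Fin (n + 1)) ℂ) ^ (b i))).restrictScalars ℂ := by
  classical
  ext f
  simp only [LinearMap.mem_ker, Submodule.restrictScalars_mem, brieskornAux]
  constructor
  · intro hf
    -- f has all coefficients on the box equal to 0
    have hbox : ∀ m : Fin (n + 1) →₀ ℕ, (∀ j, m j < b j) → MvPowerSeries.coeff (R := ℂ) m f = 0 := by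
      intro m hm
      have := congrFun hf (fun i => ⟨m i, hm i⟩)
      simpa [LinearMap.pi_apply] using this
    -- decompose f as a sum of pieces
    have key : f = ∑ i : Fin (n + 1),
        ((fun m => if b i ≤ m i ∧ ∀ j < i, m j < b j then MvPowerSeries.coeff (R := ℂ) m f else 0 :
          (Fin (n + 1) →₀ ℕ) → ℂ) : MvPowerSeries (Fin (n + 1)) ℂ) := by
      ext m
      erw [map_sum]
      by_cases hex : ∃ i, b i ≤ m i
      · obtain ⟨i₀, hi₀, hmin⟩ := wellFounded_lt.has_min {i | b i ≤ m i} hex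
        rw [Finset.sum_eq_single i₀]
        · simp only [MvPowerSeries.coeff_apply]
          show _ = (if _ then _ else _)
          rw [if_pos ⟨hi₀, fun j hj => not_le.mp fun hc => hmin j hc hj⟩]
        · intro i _ hne
          simp only [MvPowerSeries.coeff_apply]
          show (if _ then _ else _) = _
          rw [if_neg]
          rintro ⟨h1, h2⟩
          rcases lt_or_gt_of_ne hne with hlt | hgt
          · exact hmin i h1 hlt
          · exact absurd hi₀ (not_le.mpr (h2 i₀ hgt))
        · intro hmem
          exact absurd (Finset.mem_univ i₀) hmem
      · push_neg at hex
        rw [hbox m (fun j => hex j), Finset.sum_eq_zero]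
        intro i _
        simp only [MvPowerSeries.coeff_apply]
        show (if _ then _ else _) = _
        rw [if_neg]
        rintro ⟨h1, -⟩
        exact absurd h1 (not_le.mpr (hex i))
    rw [key]
    refine Submodule.sum_mem _ fun i _ => ?_
    have hdvd : (MvPowerSeries.X i : MvPowerSeries (Fin (n + 1)) ℂ) ^ (b i) ∣
        ((fun m => if b i ≤ m i ∧ ∀ j < i, m j < b j then MvPowerSeries.coeff (R := ℂ) m f else 0 :
          (Fin (n + 1) →₀ ℕ) → ℂ) : MvPowerSeries (Fin (n + 1)) ℂ) := by
      erw [MvPowerSeries.X_pow_dvd_iff]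
      intro m hm
      simp only [MvPowerSeries.coeff_apply]
      show (if _ then _ else _) = _
      rw [if_neg]
      rintro ⟨h1, -⟩
      exact absurd h1 (not_le.mpr hm)
    obtain ⟨g, hg⟩ := hdvd
    rw [hg]
    exact Ideal.mul_mem_right _ _ (Ideal.subset_span ⟨i, rfl⟩)
  · intro hf
    have hbox : ∀ m : Fin (n + 1) →₀ ℕ, (∀ j, m j < b j) → MvPowerSeries.coeff (R := ℂ) m f = 0 := by
      induction hf using Submodule.span_induction with
      | mem x hx =>
        obtain ⟨i, rfl⟩ := hx
        intro m hm
        rw [MvPowerSeries.coeff_X_pow]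
        rw [if_neg]
        rintro rfl
        exact absurd (hm i) (by simp [Nat.not_lt])
      | zero => simp
      | add x y _ _ hx hy => intro m hm; simp [hx m hm, hy m hm]
      | smul r x _ hx =>
        intro m hm
        rw [smul_eq_mul, MvPowerSeries.coeff_mul, Finset.sum_eq_zero]
        rintro ⟨p, q⟩ hpq
        rw [Finset.HasAntidiagonal.mem_antidiagonal] at hpq
        have : MvPowerSeries.coeff (R := ℂ) q x = 0 := by
          refine hx q fun j => lt_of_le_of_lt ?_ (hm j)
          rw [← hpq]
          simp
        rw [this, mul_zero]
    funext d
    exact hbox _ fun j => by simpa using (d j).isLt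

end Aux

lemma brieskorn_finrank_aux (b : Fin (n + 1) → ℕ) :
    Module.finrank ℂ
      (MvPowerSeries (Fin (n + 1)) ℂ ⧸
        Ideal.span (Set.range fun i : Fin (n + 1) =>
          (MvPowerSeries.X i : MvPowerSeries (Fin (n + 1)) ℂ) ^ (b i))) = ∏ i, b i := by
  have e2 := LinearMap.quotKerEquivOfSurjective (brieskornAux b) (brieskornAux_surjective b)
  rw [brieskornAux_ker] at e2
  have e1 := Submodule.Quotient.restrictScalarsEquiv ℂ
    (Ideal.span (Set.range fun i : Fin (n + 1) =>
      (MvPowerSeries.X i : MvPowerSeries (Fin (n + 1)) ℂ) ^ (b i)))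
  rw [(e1.symm.trans e2).finrank_eq, Module.finrank_fintype_fun_eq_card, Fintype.card_pi]
  simp

/-- The Milnor number of the Brieskorn polynomial `x_0^{a_0} + ⋯ + x_n^{a_n}` (each `a i ≥ 2`)
is `∏ (a i - 1)`: the dimension over `ℂ` of the quotient of the formal power series ring
by the Jacobian ideal, which is generated by the partial derivatives `a_i x_i^{a_i - 1}`. -/
theorem brieskorn_milnor_number (n : ℕ) (a : Fin (n + 1) → ℕ) (ha : ∀ i, 2 ≤ a i) :
    Module.finrank ℂ
      (MvPowerSeries (Fin (n + 1)) ℂ ⧸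
        Ideal.span (Set.range fun i : Fin (n + 1) =>
          (a i : MvPowerSeries (Fin (n + 1)) ℂ) * MvPowerSeries.X i ^ (a i - 1))) =
    ∏ i : Fin (n + 1), (a i - 1) := by
  have hspan : Ideal.span (Set.range fun i : Fin (n + 1) =>
      (a i : MvPowerSeries (Fin (n + 1)) ℂ) * MvPowerSeries.X i ^ (a i - 1)) =
      Ideal.span (Set.range fun i : Fin (n + 1) =>
      (MvPowerSeries.X i : MvPowerSeries (Fin (n + 1)) ℂ) ^ (a i - 1)) := by
    apply le_antisymm <;> rw [Ideal.span_le] <;> rintro - ⟨i, rfl⟩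
    · exact Ideal.mul_mem_left _ _ (Ideal.subset_span ⟨i, rfl⟩)
    · have hne : (a i : ℂ) ≠ 0 := Nat.cast_ne_zero.mpr (by have := ha i; omega)
      have : (MvPowerSeries.X i : MvPowerSeries (Fin (n + 1)) ℂ) ^ (a i - 1) =
          (MvPowerSeries.C (σ := Fin (n + 1)) (R := ℂ) ((a i : ℂ)⁻¹)) *
            ((a i : MvPowerSeries (Fin (n + 1)) ℂ) * MvPowerSeries.X i ^ (a i - 1)) := by
        rw [← mul_assoc, show (a i : MvPowerSeries (Fin (n + 1)) ℂ) =
          MvPowerSeries.C (σ := Fin (n + 1)) (R := ℂ) (a i : ℂ) from (map_natCast _ _).symm,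
          ← map_mul, inv_mul_cancel₀ hne, map_one, one_mul]
      show MvPowerSeries.X i ^ (a i - 1) ∈ _
      rw [this]
      exact Ideal.mul_mem_left _ _ (Ideal.subset_span ⟨i, rfl⟩)
  rw [hspan, brieskorn_finrank_aux]
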